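/- For every f ∈ L²([0,1], ℝ), ∫_0^1 (∫_0^s f(t) dt)² ds ≤ (4/π²) ∫_0^1 f(t)² dt, and the constant 4/π² cannot be replaced by any smaller constant. -/

import Mathlib

open MeasureTheory Set

section VolterraAux

open Real
open scoped ENNReal


lemma int_cos' (s : ℝ) : ∫ t in (0:ℝ)..s, Real.cos (π/2 * t) = 2/π * Real.sin (π/2 * s) := by
  rw [intervalIntegral.integral_comp_mul_left Real.cos (by positivity : (π/2 : ℝ) ≠ 0)]
  rw [integral_cos]
  field_simp
  simp only [smul_eq_mul, mul_zero, zero_div, Real.sin_zero, sub_zero]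
  field_simp

lemma int_sin' (t : ℝ) : ∫ s in t..(1:ℝ), Real.sin (π/2 * s) = 2/π * Real.cos (π/2 * t) := by
  rw [intervalIntegral.integral_comp_mul_left Real.sin (by positivity : (π/2 : ℝ) ≠ 0)]
  rw [integral_sin]
  rw [mul_one, Real.cos_pi_div_two]
  field_simp
  simp only [smul_eq_mul, sub_zero]
  field_simp

lemma int_cos_sq' : ∫ t in (0:ℝ)..1, Real.cos (π/2 * t) ^ 2 = 1/2 := by
  rw [intervalIntegral.integral_comp_mul_left (fun x => Real.cos x ^ 2) (by positivity : (π/2 : ℝ) ≠ 0)]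
  rw [integral_cos_sq]
  simp [Real.cos_pi_div_two, Real.sin_pi_div_two]
  field_simp

lemma int_sin_sq' : ∫ t in (0:ℝ)..1, Real.sin (π/2 * t) ^ 2 = 1/2 := by
  rw [intervalIntegral.integral_comp_mul_left (fun x => Real.sin x ^ 2) (by positivity : (π/2 : ℝ) ≠ 0)]
  rw [integral_sin_sq]
  simp [Real.cos_pi_div_two, Real.sin_pi_div_two]
  field_simp


-- step 1: pointwise Cauchy-Schwarz
lemma step1 {g : ℝ → ℝ} (hmeas : Measurable g) (hg0 : ∀ t, 0 ≤ g t)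
    (hgint : IntegrableOn g (Icc 0 1)) {s : ℝ} (hs : s ∈ Icc (0:ℝ) 1) :
    ENNReal.ofReal ((∫ t in (0:ℝ)..s, g t)^2)
      ≤ (ENNReal.ofReal (2/π) * ENNReal.ofReal (Real.sin (π/2 * s)))
        * ∫⁻ t in Ioc 0 s, ENNReal.ofReal (g t) ^ 2 / ENNReal.ofReal (Real.cos (π/2 * t)) := by
  set G : ℝ → ℝ≥0∞ := fun t => ENNReal.ofReal (g t) with hG
  set a : ℝ → ℝ≥0∞ := fun t => ENNReal.ofReal (Real.cos (π/2 * t)) with ha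
  have hsub : Ioc (0:ℝ) s ⊆ Icc 0 1 := fun t ht => ⟨le_of_lt ht.1, ht.2.trans hs.2⟩
  -- a.e. positivity of a on Ioc 0 s
  have hane : ∀ᵐ t ∂(volume.restrict (Ioc (0:ℝ) s)), a t ≠ 0 ∧ a t ≠ ⊤ := by
    have h1 : ∀ᵐ t ∂(volume.restrict (Ioc (0:ℝ) s)), t ≠ 1 := by
      refine (ae_restrict_iff' measurableSet_Ioc).2 ?_
      have : volume ({(1:ℝ)}) = 0 := measure_singleton 1
      filter_upwards [measure_eq_zero_iff_ae_notMem.1 this] with t ht _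
      exact fun h => ht (by simp [h])
    filter_upwards [h1, ae_restrict_mem measurableSet_Ioc] with t ht1 htm
    have htlt : t < 1 := lt_of_le_of_ne (htm.2.trans hs.2) ht1
    have hcos : 0 < Real.cos (π/2 * t) :=
      Real.cos_pos_of_mem_Ioo ⟨by nlinarith [htm.1, Real.pi_pos], by nlinarith [htm.1, Real.pi_pos]⟩
    exact ⟨ne_of_gt (ENNReal.ofReal_pos.2 hcos), ENNReal.ofReal_ne_top⟩
  have hGmeas : Measurable G := ENNReal.measurable_ofReal.comp hmeas
  have hameas : Measurable a := by
    apply ENNReal.measurable_ofReal.comp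
    exact (Real.continuous_cos.comp (continuous_const.mul continuous_id)).measurable
  -- interval integral as lintegral
  have h1 : ∫ t in (0:ℝ)..s, g t = ∫ t in Ioc 0 s, g t := intervalIntegral.integral_of_le hs.1
  have h2 : ENNReal.ofReal (∫ t in Ioc 0 s, g t) = ∫⁻ t in Ioc 0 s, G t :=
    ofReal_integral_eq_lintegral_ofReal (hgint.mono_set hsub)
      (Filter.Eventually.of_forall hg0)
  -- Cauchy-Schwarz
  have hcs : ∫⁻ t in Ioc 0 s, G t
      ≤ (∫⁻ t in Ioc 0 s, a t) ^ (1/2:ℝ) * (∫⁻ t in Ioc 0 s, G t ^ 2 / a t) ^ (1/2:ℝ) := by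
    have hpq : Real.HolderConjugate 2 2 := Real.HolderConjugate.two_two
    have hu : AEMeasurable (fun t => a t ^ (1/2:ℝ)) (volume.restrict (Ioc (0:ℝ) s)) :=
      (hameas.pow_const _).aemeasurable
    have hv : AEMeasurable (fun t => G t / a t ^ (1/2:ℝ)) (volume.restrict (Ioc (0:ℝ) s)) :=
      (hGmeas.div (hameas.pow_const _)).aemeasurable
    have := ENNReal.lintegral_mul_le_Lp_mul_Lq (volume.restrict (Ioc (0:ℝ) s)) hpq hu hv
    have heq : ∫⁻ t in Ioc 0 s, G t
        = ∫⁻ t in Ioc 0 s, ((fun t => a t ^ (1/2:ℝ)) * fun t => G t / a t ^ (1/2:ℝ)) t := by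
      refine lintegral_congr_ae ?_
      filter_upwards [hane] with t ⟨h0, htop⟩
      have h0' : a t ^ (1/2:ℝ) ≠ 0 := by
        simp [ENNReal.rpow_eq_zero_iff, h0, htop]
      have htop' : a t ^ (1/2:ℝ) ≠ ⊤ := by
        simp [ENNReal.rpow_eq_top_iff, h0, htop]
      simp only [Pi.mul_apply]
      rw [ENNReal.mul_div_cancel h0' htop']
    rw [heq]
    refine this.trans (le_of_eq ?_)
    congr 1
    · congr 1
      refine lintegral_congr fun t => ?_
      rw [← ENNReal.rpow_mul]; norm_num
    · congr 1
      refine lintegral_congr fun t => ?_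
      rw [ENNReal.div_rpow_of_nonneg _ _ (by norm_num : (0:ℝ) ≤ 2), ← ENNReal.rpow_mul]
      norm_num
  -- value of ∫⁻ a
  have hcosint : IntegrableOn (fun t => Real.cos (π/2 * t)) (Ioc 0 s) :=
    (Real.continuous_cos.comp (continuous_const.mul continuous_id)).integrableOn_Ioc
  have hcosnn : 0 ≤ᵐ[volume.restrict (Ioc (0:ℝ) s)] fun t => Real.cos (π/2 * t) := by
    refine (ae_restrict_iff' measurableSet_Ioc).2 (Filter.Eventually.of_forall fun t ht => ?_)
    refine Real.cos_nonneg_of_mem_Icc ⟨by nlinarith [ht.1, Real.pi_pos], ?_⟩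
    nlinarith [ht.1, ht.2.trans hs.2, Real.pi_pos]
  have h3 : ∫⁻ t in Ioc 0 s, a t = ENNReal.ofReal (2/π * Real.sin (π/2 * s)) := by
    rw [ha]
    rw [← ofReal_integral_eq_lintegral_ofReal hcosint hcosnn]
    rw [← intervalIntegral.integral_of_le hs.1, int_cos' s]
  have sq_half : ∀ x : ℝ≥0∞, (x ^ (1/2:ℝ))^2 = x := fun x => by
    rw [← ENNReal.rpow_natCast, ← ENNReal.rpow_mul]; norm_num
  calc ENNReal.ofReal ((∫ t in (0:ℝ)..s, g t)^2)
      = (∫⁻ t in Ioc 0 s, G t) ^ 2 := by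
        rw [h1, ENNReal.ofReal_pow (setIntegral_nonneg measurableSet_Ioc fun t _ => hg0 t), h2]
    _ ≤ ((∫⁻ t in Ioc 0 s, a t) ^ (1/2:ℝ) * (∫⁻ t in Ioc 0 s, G t ^ 2 / a t) ^ (1/2:ℝ)) ^ 2 :=
        pow_le_pow_left₀ (zero_le (α := ℝ≥0∞)) hcs 2
    _ = (∫⁻ t in Ioc 0 s, a t) * ∫⁻ t in Ioc 0 s, G t ^ 2 / a t := by
        rw [mul_pow, sq_half, sq_half]
    _ = (ENNReal.ofReal (2/π) * ENNReal.ofReal (Real.sin (π/2 * s)))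
        * ∫⁻ t in Ioc 0 s, G t ^ 2 / a t := by
        rw [h3, ENNReal.ofReal_mul (by positivity)]

set_option maxHeartbeats 1000000 in
lemma core {g : ℝ → ℝ} (hmeas : Measurable g) (hg0 : ∀ t, 0 ≤ g t)
    (hgint : IntegrableOn g (Icc 0 1)) (hg2 : IntegrableOn (fun t => g t ^ 2) (Icc 0 1)) :
    ∫ s in (0:ℝ)..1, (∫ t in (0:ℝ)..s, g t) ^ 2 ≤ (4/π^2) * ∫ t in (0:ℝ)..1, g t ^ 2 := by
  set G : ℝ → ℝ≥0∞ := fun t => ENNReal.ofReal (g t) with hG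
  set a : ℝ → ℝ≥0∞ := fun t => ENNReal.ofReal (Real.cos (π/2 * t)) with ha
  set w : ℝ → ℝ≥0∞ := fun s => ENNReal.ofReal (Real.sin (π/2 * s)) with hw
  set c : ℝ≥0∞ := ENNReal.ofReal (2/π) with hc
  set q : ℝ → ℝ≥0∞ := fun t => G t ^ 2 / a t with hq
  have hGmeas : Measurable G := ENNReal.measurable_ofReal.comp hmeas
  have hameas : Measurable a := ENNReal.measurable_ofReal.comp
    (Real.continuous_cos.comp (continuous_const.mul continuous_id)).measurable
  have hwmeas : Measurable w := ENNReal.measurable_ofReal.comp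
    (Real.continuous_sin.comp (continuous_const.mul continuous_id)).measurable
  have hqmeas : Measurable q := (hGmeas.pow_const 2).div hameas
  set K : ℝ → ℝ → ℝ≥0∞ := fun s t => if t ≤ s then (c * w s) * q t else 0 with hK
  have hKmeas : Measurable (Function.uncurry K) := by
    have : Function.uncurry K = fun z : ℝ × ℝ =>
        if z.2 ≤ z.1 then (c * w z.1) * q z.2 else 0 := rfl
    rw [this]
    exact Measurable.ite (measurableSet_le measurable_snd measurable_fst)
      (((hwmeas.comp measurable_fst).const_mul c).mul (hqmeas.comp measurable_snd))
      measurable_const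
  set F : ℝ → ℝ := fun s => ∫ t in (0:ℝ)..s, g t with hF
  have hFcont : ContinuousOn F (Icc 0 1) := by
    refine (intervalIntegral.continuousOn_primitive hgint).congr fun x hx => ?_
    exact intervalIntegral.integral_of_le hx.1
  have hF2int : IntegrableOn (fun s => F s ^ 2) (Icc 0 1) :=
    (hFcont.pow 2).integrableOn_Icc
  -- a.e. t ≠ 1 and positivity facts
  have haeneq : ∀ᵐ t ∂(volume.restrict (Ioc (0:ℝ) 1)), t ≠ 1 := by
    have : volume ({(1:ℝ)}) = 0 := measure_singleton 1
    exact ae_restrict_of_ae ((measure_eq_zero_iff_ae_notMem.1 this).mono fun t ht h => ht (by simp [h]))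
  have hane : ∀ᵐ t ∂(volume.restrict (Ioc (0:ℝ) 1)), a t ≠ 0 ∧ a t ≠ ⊤ := by
    filter_upwards [haeneq, ae_restrict_mem measurableSet_Ioc] with t ht1 htm
    have hcos : 0 < Real.cos (π/2 * t) := by
      have htlt : t < 1 := lt_of_le_of_ne htm.2 ht1
      exact Real.cos_pos_of_mem_Ioo ⟨by nlinarith [htm.1, Real.pi_pos],
        by nlinarith [htm.1, Real.pi_pos]⟩
    exact ⟨ne_of_gt (ENNReal.ofReal_pos.2 hcos), ENNReal.ofReal_ne_top⟩
  -- main chain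
  have keyA : ∫⁻ s in Ioc (0:ℝ) 1, ENNReal.ofReal (F s ^ 2)
      ≤ ∫⁻ s in Ioc (0:ℝ) 1, ∫⁻ t in Ioc (0:ℝ) 1, K s t := by
    refine lintegral_mono_ae ?_
    filter_upwards [ae_restrict_mem measurableSet_Ioc] with s hsm
    have hs : s ∈ Icc (0:ℝ) 1 := ⟨le_of_lt hsm.1, hsm.2⟩
    refine (step1 hmeas hg0 hgint hs).trans (le_of_eq ?_)
    rw [← lintegral_const_mul _ hqmeas]
    rw [← lintegral_indicator measurableSet_Ioc, ← lintegral_indicator measurableSet_Ioc]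
    refine lintegral_congr fun t => ?_
    by_cases h : t ∈ Ioc (0:ℝ) s
    · have h1 : t ∈ Ioc (0:ℝ) 1 := ⟨h.1, h.2.trans hs.2⟩
      simp [indicator_of_mem h, indicator_of_mem h1, hK, h.2, hc, hw]
    · rw [indicator_of_notMem h]
      by_cases h2 : t ∈ Ioc (0:ℝ) 1
      · have : ¬ (t ≤ s) := fun hts => h ⟨h2.1, hts⟩
        simp [indicator_of_mem h2, hK, this]
      · rw [indicator_of_notMem h2]
  have keyB : ∫⁻ s in Ioc (0:ℝ) 1, ∫⁻ t in Ioc (0:ℝ) 1, K s t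
      = ∫⁻ t in Ioc (0:ℝ) 1, ∫⁻ s in Ioc (0:ℝ) 1, K s t :=
    lintegral_lintegral_swap hKmeas.aemeasurable
  have keyC : ∫⁻ t in Ioc (0:ℝ) 1, ∫⁻ s in Ioc (0:ℝ) 1, K s t
      = ∫⁻ t in Ioc (0:ℝ) 1, ENNReal.ofReal (4/π^2) * G t ^ 2 := by
    refine lintegral_congr_ae ?_
    filter_upwards [hane, ae_restrict_mem measurableSet_Ioc] with t hat htm
    have ht0 : 0 < t := htm.1
    -- inner integral over s
    have e1 : ∀ s, K s t = (Ici t).indicator (fun s => (c * w s) * q t) s := by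
      intro s
      by_cases h : t ≤ s
      · simp [hK, h, indicator_of_mem (mem_Ici.2 h)]
      · simp [hK, h, indicator_of_notMem (fun hh => h (mem_Ici.1 hh))]
    have hset : Ici t ∩ Ioc (0:ℝ) 1 = Icc t 1 := by
      ext s
      simp only [mem_inter_iff, mem_Ici, mem_Ioc, mem_Icc]
      constructor
      · rintro ⟨h1, _, h3⟩; exact ⟨h1, h3⟩
      · rintro ⟨h1, h2⟩; exact ⟨h1, lt_of_lt_of_le ht0 h1, h2⟩
    have e2 : ∫⁻ s in Ioc (0:ℝ) 1, K s t = ∫⁻ s in Icc t 1, (c * w s) * q t := by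
      simp_rw [e1]
      rw [lintegral_indicator measurableSet_Ici, Measure.restrict_restrict measurableSet_Ici,
        hset]
    have hsincont : Continuous (fun s : ℝ => Real.sin (π/2 * s)) := by continuity
    have hsinint : IntegrableOn (fun s => Real.sin (π/2 * s)) (Icc t 1) :=
      hsincont.integrableOn_Icc
    have hsinnn : 0 ≤ᵐ[volume.restrict (Icc t 1)] fun s => Real.sin (π/2 * s) := by
      refine (ae_restrict_iff' measurableSet_Icc).2 (Filter.Eventually.of_forall fun s hsm => ?_)
      have hs0 : 0 ≤ s := ht0.le.trans hsm.1
      have hs1 : s ≤ 1 := hsm.2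
      have hπ := Real.pi_pos
      refine Real.sin_nonneg_of_nonneg_of_le_pi (by positivity) ?_
      nlinarith [mul_nonneg (sub_nonneg.2 hs1) hπ.le]
    have e3 : ∫⁻ s in Icc t 1, w s = ENNReal.ofReal (2/π * Real.cos (π/2 * t)) := by
      rw [hw, ← ofReal_integral_eq_lintegral_ofReal hsinint hsinnn]
      rw [integral_Icc_eq_integral_Ioc, ← intervalIntegral.integral_of_le htm.2, int_sin' t]
    rw [e2, lintegral_mul_const _ (hwmeas.const_mul c), lintegral_const_mul c hwmeas, e3]
    have e4 : c * ENNReal.ofReal (2/π * Real.cos (π/2 * t)) = ENNReal.ofReal (4/π^2) * a t := by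
      rw [hc, ha, ← ENNReal.ofReal_mul (by positivity), ← ENNReal.ofReal_mul (by positivity)]
      congr 1
      field_simp
      ring
    rw [e4, mul_assoc, hq, ENNReal.mul_div_cancel hat.1 hat.2]
  have keyD : ∫⁻ t in Ioc (0:ℝ) 1, ENNReal.ofReal (4/π^2) * G t ^ 2
      = ENNReal.ofReal ((4/π^2) * ∫ t in Ioc (0:ℝ) 1, g t ^ 2) := by
    rw [lintegral_const_mul _ (hGmeas.pow_const 2)]
    have hGe : ∀ t, G t ^ 2 = ENNReal.ofReal (g t ^ 2) := fun t =>
      (ENNReal.ofReal_pow (hg0 t) 2).symm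
    simp_rw [hGe]
    rw [← ofReal_integral_eq_lintegral_ofReal (hg2.mono_set Ioc_subset_Icc_self)
      (Filter.Eventually.of_forall fun t => sq_nonneg _)]
    rw [ENNReal.ofReal_mul (by positivity)]
  have lhs_eq : ENNReal.ofReal (∫ s in (0:ℝ)..1, F s ^ 2)
      = ∫⁻ s in Ioc (0:ℝ) 1, ENNReal.ofReal (F s ^ 2) := by
    rw [intervalIntegral.integral_of_le zero_le_one]
    exact ofReal_integral_eq_lintegral_ofReal (hF2int.mono_set Ioc_subset_Icc_self)
      (Filter.Eventually.of_forall fun s => sq_nonneg _)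
  have final : ENNReal.ofReal (∫ s in (0:ℝ)..1, F s ^ 2)
      ≤ ENNReal.ofReal ((4/π^2) * ∫ t in Ioc (0:ℝ) 1, g t ^ 2) := by
    rw [lhs_eq, ← keyD, ← keyC, ← keyB]
    exact keyA
  have hrhs_nn : 0 ≤ (4/π^2) * ∫ t in Ioc (0:ℝ) 1, g t ^ 2 := by
    have h0 : 0 ≤ ∫ t in Ioc (0:ℝ) 1, g t ^ 2 :=
      setIntegral_nonneg measurableSet_Ioc fun t _ => sq_nonneg _
    positivity
  have hfin := (ENNReal.ofReal_le_ofReal_iff hrhs_nn).1 final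
  rw [show (∫ t in (0:ℝ)..1, g t ^ 2) = ∫ t in Ioc (0:ℝ) 1, g t ^ 2 from
    intervalIntegral.integral_of_le zero_le_one]
  exact hfin

lemma part1 (f : ℝ → ℝ) (hf : MemLp f 2 (volume.restrict (Icc (0:ℝ) 1))) :
    ∫ s in (0:ℝ)..1, (∫ t in (0:ℝ)..s, f t) ^ 2
      ≤ (4 / π ^ 2) * ∫ t in (0:ℝ)..1, f t ^ 2 := by
  set μ := volume.restrict (Icc (0:ℝ) 1) with hμ
  have hsm := hf.aestronglyMeasurable
  set f' : ℝ → ℝ := hsm.mk f with hf'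
  have hae : f =ᵐ[μ] f' := hsm.ae_eq_mk
  set g : ℝ → ℝ := fun t => |f' t| with hg
  have hgmeas : Measurable g := hsm.measurable_mk.abs
  have hfmem' : MemLp f' 2 μ := hf.ae_eq hae
  have hgmem : MemLp g 2 μ := by simpa [Real.norm_eq_abs] using hfmem'.norm
  have hg2int : IntegrableOn (fun t => g t ^ 2) (Icc 0 1) := hgmem.integrable_sq
  have hgint : IntegrableOn g (Icc 0 1) :=
    memLp_one_iff_integrable.1 (hgmem.mono_exponent (by norm_num))
  have hfint : IntegrableOn f (Icc 0 1) :=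
    memLp_one_iff_integrable.1 (hf.mono_exponent (by norm_num))
  have haevol : ∀ᵐ x ∂volume, x ∈ Icc (0:ℝ) 1 → f x = f' x :=
    (ae_restrict_iff' measurableSet_Icc).1 hae
  -- pointwise comparison of primitives
  have hpt : ∀ s ∈ Icc (0:ℝ) 1, (∫ t in (0:ℝ)..s, f t) ^ 2 ≤ (∫ t in (0:ℝ)..s, g t) ^ 2 := by
    intro s hs
    have hIf : ∫ t in (0:ℝ)..s, f t = ∫ t in (0:ℝ)..s, f' t := by
      refine intervalIntegral.integral_congr_ae ?_
      filter_upwards [haevol] with x hx hxm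
      refine hx ?_
      rw [uIoc_of_le hs.1] at hxm
      exact ⟨hxm.1.le, hxm.2.trans hs.2⟩
    calc (∫ t in (0:ℝ)..s, f t) ^ 2 = |∫ t in (0:ℝ)..s, f' t| ^ 2 := by rw [hIf, sq_abs]
      _ ≤ (∫ t in (0:ℝ)..s, g t) ^ 2 := by
          refine pow_le_pow_left₀ (abs_nonneg _) ?_ 2
          exact intervalIntegral.abs_integral_le_integral_abs hs.1
  -- continuity of primitives, integrability of squares
  have hFf : ContinuousOn (fun s => ∫ t in (0:ℝ)..s, f t) (Icc 0 1) :=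
    (intervalIntegral.continuousOn_primitive hfint).congr fun x hx =>
      intervalIntegral.integral_of_le hx.1
  have hFg : ContinuousOn (fun s => ∫ t in (0:ℝ)..s, g t) (Icc 0 1) :=
    (intervalIntegral.continuousOn_primitive hgint).congr fun x hx =>
      intervalIntegral.integral_of_le hx.1
  have int1 : IntervalIntegrable (fun s => (∫ t in (0:ℝ)..s, f t) ^ 2) volume 0 1 := by
    apply ContinuousOn.intervalIntegrable
    rw [uIcc_of_le zero_le_one]
    exact hFf.pow 2
  have int2 : IntervalIntegrable (fun s => (∫ t in (0:ℝ)..s, g t) ^ 2) volume 0 1 := by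
    apply ContinuousOn.intervalIntegrable
    rw [uIcc_of_le zero_le_one]
    exact hFg.pow 2
  have hmono := intervalIntegral.integral_mono_on zero_le_one int1 int2 hpt
  refine hmono.trans ?_
  have hrhs : ∫ t in (0:ℝ)..1, g t ^ 2 = ∫ t in (0:ℝ)..1, f t ^ 2 := by
    refine intervalIntegral.integral_congr_ae ?_
    filter_upwards [haevol] with x hx hxm
    rw [uIoc_of_le zero_le_one] at hxm
    rw [hg]
    simp only []
    rw [sq_abs, hx ⟨hxm.1.le, hxm.2⟩]
  rw [← hrhs]
  exact core hgmeas (fun t => abs_nonneg _) hgint hg2int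

lemma part2 (c : ℝ)
    (hc : ∀ f : ℝ → ℝ, MemLp f 2 (volume.restrict (Icc (0:ℝ) 1)) →
      ∫ s in (0:ℝ)..1, (∫ t in (0:ℝ)..s, f t) ^ 2
        ≤ c * ∫ t in (0:ℝ)..1, f t ^ 2) :
    4 / π ^ 2 ≤ c := by
  have hπ := Real.pi_pos
  set f : ℝ → ℝ := fun t => Real.cos (π/2 * t) with hfdef
  have hcont : Continuous f := by continuity
  have hmem : MemLp f 2 (volume.restrict (Icc (0:ℝ) 1)) := by
    refine MemLp.mono_exponent (q := ⊤) ?_ le_top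
    refine memLp_top_of_bound hcont.aestronglyMeasurable 1 ?_
    exact Filter.Eventually.of_forall fun t => by
      simpa [Real.norm_eq_abs] using Real.abs_cos_le_one (π/2 * t)
  have key := hc f hmem
  have hLHS : ∫ s in (0:ℝ)..1, (∫ t in (0:ℝ)..s, f t) ^ 2 = 2 / π ^ 2 := by
    have h1 : ∀ s ∈ uIcc (0:ℝ) 1, (∫ t in (0:ℝ)..s, f t) ^ 2
        = (2/π)^2 * Real.sin (π/2 * s) ^ 2 := by
      intro s _
      rw [hfdef, int_cos' s, mul_pow]
    rw [intervalIntegral.integral_congr h1, intervalIntegral.integral_const_mul,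
      int_sin_sq']
    field_simp
  have hRHS : ∫ t in (0:ℝ)..1, f t ^ 2 = 1/2 := int_cos_sq'
  rw [hLHS, hRHS] at key
  have hπ2 : (0:ℝ) < π ^ 2 := by positivity
  rw [div_le_iff₀ hπ2] at key ⊢
  linarith


end VolterraAux

/-- For every `f ∈ L²([0,1], ℝ)`,
`∫_0^1 (∫_0^s f(t) dt)² ds ≤ (4/π²) ∫_0^1 f(t)² dt`,
and the constant `4/π²` cannot be replaced by any smaller constant. -/
theorem volterra_inequality_sharp :
    (∀ f : ℝ → ℝ, MemLp f 2 (volume.restrict (Icc (0:ℝ) 1)) →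
      ∫ s in (0:ℝ)..1, (∫ t in (0:ℝ)..s, f t) ^ 2
        ≤ (4 / Real.pi ^ 2) * ∫ t in (0:ℝ)..1, f t ^ 2) ∧
    ∀ c : ℝ,
      (∀ f : ℝ → ℝ, MemLp f 2 (volume.restrict (Icc (0:ℝ) 1)) →
        ∫ s in (0:ℝ)..1, (∫ t in (0:ℝ)..s, f t) ^ 2
          ≤ c * ∫ t in (0:ℝ)..1, f t ^ 2) →
      4 / Real.pi ^ 2 ≤ c := by
  exact ⟨part1, part2⟩
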